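/- Let G be a 3-connected simple cubic claw-free graph that is not isomorphic to K4. Then every vertex of G lies in exactly one triangle of G. -/
import Mathlib


open SimpleGraph

/-- A graph is cubic: every vertex has exactly 3 neighbours. -/
def IsCubic {V : Type*} (G : SimpleGraph V) : Prop :=
  ∀ v : V, Nat.card (G.neighborSet v) = 3

/-- A graph is claw-free: it has no induced `K_{1,3}`. -/
def IsClawFree {V : Type*} (G : SimpleGraph V) : Prop :=
  ∀ u a b c : V, G.Adj u a → G.Adj u b → G.Adj u c →
    a ≠ b → a ≠ c → b ≠ c → ¬ G.Adj a b → ¬ G.Adj a c → ¬ G.Adj b c → False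

/-- A graph is 3-connected: it has more than 3 vertices and deleting any set of at
most 2 vertices leaves it connected. -/
def ThreeConnected {V : Type*} [Fintype V] (G : SimpleGraph V) : Prop :=
  3 < Fintype.card V ∧
    ∀ S : Set V, Nat.card S ≤ 2 → (G.induce (Sᶜ : Set V)).Connected

/-- Walks stay inside an adjacency-closed set. -/
lemma closed_walk {V : Type*} {G : SimpleGraph V} {C : Set V}
    (hC : ∀ ⦃x⦄, x ∈ C → ∀ ⦃y⦄, G.Adj x y → y ∈ C) :
    ∀ {u w : V}, G.Walk u w → u ∈ C → w ∈ C := by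
  intro u w p
  induction p with
  | nil => exact id
  | cons h _ ih => intro hu; exact ih (hC hu h)

/-- In a cubic graph, three distinct neighbours are all the neighbours. -/
lemma nbrs {V : Type*} [Fintype V] {G : SimpleGraph V} (hcubic : IsCubic G)
    {v p q r : V} (hpq : p ≠ q) (hpr : p ≠ r) (hqr : q ≠ r)
    (hp : G.Adj v p) (hq : G.Adj v q) (hr : G.Adj v r) :
    ∀ {y : V}, G.Adj v y → y = p ∨ y = q ∨ y = r := by
  classical
  intro y hy
  have hcard : (G.neighborFinset v).card = 3 := by
    have := hcubic v
    rw [Nat.card_eq_fintype_card] at this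
    rwa [SimpleGraph.neighborFinset_def, Set.toFinset_card]
  have hsub : ({p, q, r} : Finset V) ⊆ G.neighborFinset v := by
    intro z hz
    simp only [Finset.mem_insert, Finset.mem_singleton] at hz
    rcases hz with h | h | h <;> subst h <;> simpa using ‹_›
  have hcard2 : ({p, q, r} : Finset V).card = 3 := by
    rw [Finset.card_insert_of_notMem (by simp [hpq, hpr]),
      Finset.card_insert_of_notMem (by simp [hqr]), Finset.card_singleton]
  have heq := Finset.eq_of_subset_of_card_le hsub (by omega)
  have : y ∈ ({p, q, r} : Finset V) := by
    rw [heq]; simpa using hy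
  simpa using this

/-- In a cubic graph a vertex with two named neighbours has a third one. -/
lemma third_nbr {V : Type*} [Fintype V] {G : SimpleGraph V} (hcubic : IsCubic G)
    {b v a : V} (hva : v ≠ a) (hbv : G.Adj b v) (hba : G.Adj b a) :
    ∃ x : V, G.Adj b x ∧ x ≠ v ∧ x ≠ a := by
  classical
  have hcard : (G.neighborFinset b).card = 3 := by
    have := hcubic b
    rw [Nat.card_eq_fintype_card] at this
    rwa [SimpleGraph.neighborFinset_def, Set.toFinset_card]
  have hsub : ({v, a} : Finset V) ⊆ G.neighborFinset b := by
    intro z hz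
    simp only [Finset.mem_insert, Finset.mem_singleton] at hz
    rcases hz with h | h <;> subst h <;> simpa using ‹_›
  have hcard2 : ({v, a} : Finset V).card ≤ 2 := Finset.card_insert_le _ _ |>.trans (by simp)
  obtain ⟨x, hx1, hx2⟩ := Finset.exists_of_ssubset
    (hsub.ssubset_of_ne (by intro h; rw [h] at hcard2; omega))
  refine ⟨x, by simpa using hx1, ?_, ?_⟩ <;> rintro rfl <;> simp at hx2

/-- No vertex lies in two triangles. -/
lemma no_two {V : Type*} [Fintype V] {G : SimpleGraph V} (h3c : ThreeConnected G)
    (hcubic : IsCubic G) (hK4 : ¬ Nonempty (G ≃g (⊤ : SimpleGraph (Fin 4))))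
    {v p q r : V} (hpq : p ≠ q) (hpr : p ≠ r) (hqr : q ≠ r)
    (hvp : G.Adj v p) (hvq : G.Adj v q) (hvr : G.Adj v r)
    (hApq : G.Adj p q) (hApr : G.Adj p r) : False := by
  classical
  have hvp' := hvp.symm; have hvq' := hvq.symm; have hvr' := hvr.symm
  have hApq' := hApq.symm; have hApr' := hApr.symm
  have hvne_p : v ≠ p := hvp.ne
  have hvne_q : v ≠ q := hvq.ne
  have hvne_r : v ≠ r := hvr.ne
  by_cases hAqr : G.Adj q r
  · -- all three pairs adjacent : K4 component
    have hAqr' := hAqr.symm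
    set C : Set V := {v, p, q, r} with hCdef
    have hclosed : ∀ ⦃x⦄, x ∈ C → ∀ ⦃y⦄, G.Adj x y → y ∈ C := by
      rintro x (rfl | rfl | rfl | rfl) y hxy
      · rcases nbrs hcubic hpq hpr hqr hvp hvq hvr hxy with rfl | rfl | rfl <;> simp [hCdef]
      · rcases nbrs hcubic hvne_q hvne_r hqr hvp' hApq hApr hxy with rfl | rfl | rfl <;> simp [hCdef]
      · rcases nbrs hcubic hvne_p hvne_r hpr hvq' hApq' hAqr hxy with rfl | rfl | rfl <;> simp [hCdef]
      · rcases nbrs hcubic hvne_p hvne_q hpq hvr' hApr' hAqr' hxy with rfl | rfl | rfl <;> simp [hCdef]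
    have hconn := h3c.2 ∅ (by simp)
    have hmem : ∀ x : V, x ∈ C := by
      intro x
      obtain ⟨w⟩ := hconn.preconnected ⟨v, by simp⟩ ⟨x, by simp⟩
      have hclosed' : ∀ ⦃z : ((∅ : Set V)ᶜ : Set V)⦄,
          z ∈ {z : ((∅ : Set V)ᶜ : Set V) | z.1 ∈ C} →
          ∀ ⦃y : ((∅ : Set V)ᶜ : Set V)⦄, (G.induce _).Adj z y →
          y ∈ {z : ((∅ : Set V)ᶜ : Set V) | z.1 ∈ C} := by
        intro z hz y hzy
        exact hclosed hz hzy
      exact closed_walk hclosed' w (by simp [hCdef])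
    have hadj : ∀ x y : V, x ≠ y → G.Adj x y := by
      intro x y hne
      rcases hmem x with rfl | rfl | rfl | rfl <;> rcases hmem y with rfl | rfl | rfl | rfl <;>
        first
          | exact absurd rfl hne
          | assumption
    have hcard4 : Fintype.card V = 4 := by
      have huniv : (Finset.univ : Finset V) = {v, p, q, r} := by
        apply Finset.eq_of_subset_of_card_le (fun x _ => by
          rcases hmem x with rfl | rfl | rfl | rfl <;> simp)
        exact Finset.card_le_univ _
      rw [← Finset.card_univ, huniv,
        Finset.card_insert_of_notMem (by simp [hvne_p, hvne_q, hvne_r]),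
        Finset.card_insert_of_notMem (by simp [hpq, hpr]),
        Finset.card_insert_of_notMem (by simp [hqr]), Finset.card_singleton]
    exact hK4 ⟨⟨Fintype.equivFinOfCardEq hcard4, by
      intro x y
      simp only [top_adj, ne_eq, EmbeddingLike.apply_eq_iff_eq, Equiv.coe_fn_mk]
      constructor
      · intro h; exact hadj x y h
      · exact fun h => h.ne⟩⟩
  · -- q,r not adjacent : {q,r} is a 2-cut separating {v,p}
    obtain ⟨x, hqx, hxv, hxp⟩ := third_nbr hcubic hvne_p hvq' hApq'
    have hxq : x ≠ q := hqx.ne'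
    have hxr : x ≠ r := by rintro rfl; exact hAqr hqx
    set S : Set V := {q, r} with hSdef
    have hS2 : Nat.card S ≤ 2 := by
      rw [Nat.card_coe_set_eq]
      exact (Set.ncard_insert_le _ _).trans (by simp)
    have hconn := h3c.2 S hS2
    have hvS : v ∈ Sᶜ := by simp [hSdef, hvne_q, hvne_r]
    have hxS : x ∈ Sᶜ := by simp [hSdef, hxq, hxr]
    obtain ⟨w⟩ := hconn.preconnected ⟨v, hvS⟩ ⟨x, hxS⟩
    have hclosed' : ∀ ⦃z : (Sᶜ : Set V)⦄,
        z ∈ {z : (Sᶜ : Set V) | z.1 = v ∨ z.1 = p} →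
        ∀ ⦃y : (Sᶜ : Set V)⦄, (G.induce _).Adj z y →
        y ∈ {z : (Sᶜ : Set V) | z.1 = v ∨ z.1 = p} := by
      rintro z (hz | hz) y hzy
      · have hGzy : G.Adj z.1 y.1 := hzy
        rw [hz] at hGzy
        have hyS := y.2
        rcases nbrs hcubic hpq hpr hqr hvp hvq hvr hGzy with h | h | h
        · right; exact h
        · exact absurd (by simp [hSdef, h]) hyS
        · exact absurd (by simp [hSdef, h]) hyS
      · have hGzy : G.Adj z.1 y.1 := hzy
        rw [hz] at hGzy
        have hyS := y.2
        rcases nbrs hcubic hvne_q hvne_r hqr hvp' hApq hApr hGzy with h | h | h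
        · left; exact h
        · exact absurd (by simp [hSdef, h]) hyS
        · exact absurd (by simp [hSdef, h]) hyS
    have := closed_walk hclosed' w (by left; rfl)
    rcases this with h | h
    · exact hxv h
    · exact hxp h

/-- If exactly the pair `a,b` among the neighbours of `v` is adjacent, the
triangle through `v` is unique. -/
lemma unique_tri {V : Type*} [Fintype V] {G : SimpleGraph V} (hcubic : IsCubic G)
    {v a b c : V} (hab : a ≠ b) (hac : a ≠ c) (hbc : b ≠ c)
    (hva : G.Adj v a) (hvb : G.Adj v b) (hvc : G.Adj v c)
    (hAB : G.Adj a b) (hnac : ¬ G.Adj a c) (hnbc : ¬ G.Adj b c) :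
    ∃! T : Finset V, v ∈ T ∧ T.card = 3 ∧ ∀ x ∈ T, ∀ y ∈ T, x ≠ y → G.Adj x y := by
  classical
  have hva' := hva.symm; have hvb' := hvb.symm; have hAB' := hAB.symm
  have hv_a : v ≠ a := hva.ne
  have hv_b : v ≠ b := hvb.ne
  refine ⟨{v, a, b}, ⟨by simp, ?_, ?_⟩, ?_⟩
  · rw [Finset.card_insert_of_notMem (by simp [hv_a, hv_b]),
      Finset.card_insert_of_notMem (by simp [hab]), Finset.card_singleton]
  · intro x hx y hy hxy
    simp only [Finset.mem_insert, Finset.mem_singleton] at hx hy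
    rcases hx with rfl | rfl | rfl <;> rcases hy with rfl | rfl | rfl <;>
      first
        | exact absurd rfl hxy
        | assumption
  · rintro T ⟨hvT, hT3, hTcl⟩
    have h2 : (T.erase v).card = 2 := by
      rw [Finset.card_erase_of_mem hvT, hT3]
    obtain ⟨x, y, hxy, hxyT⟩ := Finset.card_eq_two.mp h2
    have hxT : x ∈ T := Finset.mem_of_mem_erase (hxyT ▸ (by simp : x ∈ ({x, y} : Finset V)))
    have hyT : y ∈ T := Finset.mem_of_mem_erase (hxyT ▸ (by simp : y ∈ ({x, y} : Finset V)))
    have hxv : x ≠ v := Finset.ne_of_mem_erase (hxyT ▸ (by simp : x ∈ ({x, y} : Finset V)))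
    have hyv : y ≠ v := Finset.ne_of_mem_erase (hxyT ▸ (by simp : y ∈ ({x, y} : Finset V)))
    have hvx : G.Adj v x := hTcl v hvT x hxT hxv.symm
    have hvy : G.Adj v y := hTcl v hvT y hyT hyv.symm
    have hAxy : G.Adj x y := hTcl x hxT y hyT hxy
    have hTeq : T = insert v {x, y} := by
      rw [← hxyT, Finset.insert_erase hvT]
    have hx3 := nbrs hcubic hab hac hbc hva hvb hvc hvx
    have hy3 := nbrs hcubic hab hac hbc hva hvb hvc hvy
    rcases hx3 with rfl | rfl | rfl <;> rcases hy3 with rfl | rfl | rfl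
    · exact absurd rfl hxy
    · rw [hTeq]
    · exact absurd hAxy hnac
    · rw [hTeq, Finset.pair_comm]
    · exact absurd rfl hxy
    · exact absurd hAxy hnbc
    · exact absurd hAxy.symm hnac
    · exact absurd hAxy.symm hnbc
    · exact absurd rfl hxy

/-- In a 3-connected cubic claw-free graph different from `K₄`, every
vertex lies in exactly one triangle (a triangle being a 3-set of pairwise adjacent
vertices). -/
theorem stmt_18 {V : Type*} [Fintype V] (G : SimpleGraph V)
    (h3c : ThreeConnected G) (hcubic : IsCubic G) (hcf : IsClawFree G)
    (hK4 : ¬ Nonempty (G ≃g (⊤ : SimpleGraph (Fin 4)))) :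
    ∀ v : V, ∃! T : Finset V,
      v ∈ T ∧ T.card = 3 ∧ ∀ x ∈ T, ∀ y ∈ T, x ≠ y → G.Adj x y := by
  classical
  intro v
  have hcard : (G.neighborFinset v).card = 3 := by
    have := hcubic v
    rw [Nat.card_eq_fintype_card] at this
    rwa [SimpleGraph.neighborFinset_def, Set.toFinset_card]
  obtain ⟨a, b, c, hab, hac, hbc, habc⟩ := Finset.card_eq_three.mp hcard
  have hva : G.Adj v a := by
    have : a ∈ G.neighborFinset v := habc ▸ (by simp)
    simpa using this
  have hvb : G.Adj v b := by
    have : b ∈ G.neighborFinset v := habc ▸ (by simp)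
    simpa using this
  have hvc : G.Adj v c := by
    have : c ∈ G.neighborFinset v := habc ▸ (by simp)
    simpa using this
  have hone : G.Adj a b ∨ G.Adj a c ∨ G.Adj b c := by
    by_contra h
    push_neg at h
    exact hcf v a b c hva hvb hvc hab hac hbc h.1 h.2.1 h.2.2
  rcases hone with hAB | hAC | hBC
  · refine unique_tri hcubic hab hac hbc hva hvb hvc hAB ?_ ?_
    · intro hAC
      exact no_two h3c hcubic hK4 hab hac hbc hva hvb hvc hAB hAC
    · intro hBC
      exact no_two h3c hcubic hK4 hab.symm hbc hac hvb hva hvc hAB.symm hBC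
  · have hnab : ¬ G.Adj a b := fun hAB =>
      no_two h3c hcubic hK4 hac hab hbc.symm hva hvc hvb hAC hAB
    have hncb : ¬ G.Adj c b := fun hCB =>
      no_two h3c hcubic hK4 hac.symm hbc.symm hab hvc hva hvb hAC.symm hCB
    exact unique_tri hcubic hac hab hbc.symm hva hvc hvb hAC hnab hncb
  · have hnba : ¬ G.Adj b a := fun hBA =>
      no_two h3c hcubic hK4 hbc hab.symm hac.symm hvb hvc hva hBC hBA
    have hnca : ¬ G.Adj c a := fun hCA =>
      no_two h3c hcubic hK4 hbc.symm hac.symm hab.symm hvc hvb hva hBC.symm hCA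
    exact unique_tri hcubic hbc hab.symm hac.symm hvb hvc hva hBC hnba hnca
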